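/- Let 0 < v < v', let X ∼ Skellam(v/2, v/2) and X' ∼ Skellam(v'/2, v'/2). Then |X| is stochastically not greater than |X'|: P(|X| ≤ k) ≥ P(|X'| ≤ k) for all k ∈ ℕ₀. -/

import Mathlib

open MeasureTheory ProbabilityTheory ENNReal
lemma tsum_group {α β : Type*} [DecidableEq β] (π : α → β) (F : α → ℝ≥0∞) :
    ∑' (y : β), ∑' (x : α), (if π x = y then F x else 0) = ∑' x, F x := by
  rw [ENNReal.tsum_comm]
  refine tsum_congr fun x => ?_
  simp only [eq_comm]
  exact (tsum_ite_eq (π x) (fun _ => F x)).symm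

lemma tsum_addeq (a w : ℕ) (f : ℕ → ℝ≥0∞) :
    ∑' d, (if d + a = w then f d else 0) = if a ≤ w then f (w - a) else 0 := by
  classical
  split_ifs with h
  · rw [tsum_eq_single (w - a) (fun d hd => if_neg (by omega)), if_pos (by omega)]
  · exact (tsum_eq_single 0 (fun d hd => if_neg (by omega))).trans (if_neg (by omega))

lemma tsum_addeq' (a w : ℕ) (f : ℕ → ℝ≥0∞) :
    ∑' d, (if a + d = w then f d else 0) = if a ≤ w then f (w - a) else 0 := by
  simp only [fun d => show a + d = w ↔ d + a = w by omega]
  exact tsum_addeq a w f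

lemma tsum_mul_tsum' {α β : Type*} (f : α → ℝ≥0∞) (g : β → ℝ≥0∞) :
    (∑' a, f a) * (∑' b, g b) = ∑' (p : α × β), f p.1 * g p.2 := by
  rw [show (∑' (p : α × β), f p.1 * g p.2) = ∑' (a : α) (b : β), f a * g b from
    ENNReal.tsum_prod (f := fun a b => f a * g b), ← ENNReal.tsum_mul_right]
  exact tsum_congr fun a => ENNReal.tsum_mul_left.symm

lemma tsum_ite_const {ι : Type*} (c : Prop) [Decidable c] (f : ι → ℝ≥0∞) :
    ∑' i, (if c then f i else 0) = if c then ∑' i, f i else 0 := by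
  split_ifs <;> simp

lemma tsum_ite_eq_left (f : ℕ → ℝ≥0∞) (c : ℕ) :
    ∑' a, (if a = c then f a else 0) = f c := by
  classical
  rw [tsum_eq_single c (fun d hd => if_neg hd), if_pos rfl]

open Nat ProbabilityTheory

noncomputable def Phi (r : NNReal) (n : ℕ) : ℝ≥0∞ :=
  ∑' j : ℕ, (r : ℝ≥0∞) ^ (2 * j + n) * ((j ! : ℝ≥0∞))⁻¹ * (((j + n)! : ℝ≥0∞))⁻¹

noncomputable def E1 (r : NNReal) : ℝ≥0∞ := ∑' i : ℕ, (r : ℝ≥0∞) ^ i * ((i ! : ℝ≥0∞))⁻¹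

noncomputable def skN (r : NNReal) (n : ℕ) : ℝ≥0∞ :=
  ∑' j : ℕ, poissonPMF r (j + n) * poissonPMF r j

lemma finv (u c : ℕ) (h : c ≤ u) :
    ((c ! : ℝ≥0∞))⁻¹ * (((u - c)! : ℝ≥0∞))⁻¹ = (u.choose c : ℝ≥0∞) * ((u ! : ℝ≥0∞))⁻¹ := by
  have hkey : (u ! : ℝ≥0∞) = (u.choose c : ℝ≥0∞) * (c ! : ℝ≥0∞) * ((u - c)! : ℝ≥0∞) := by
    exact_mod_cast congrArg (Nat.cast : ℕ → ℝ≥0∞) (Nat.choose_mul_factorial_mul_factorial h).symm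
  have h1 : (u.choose c : ℝ≥0∞) ≠ 0 := Nat.cast_ne_zero.mpr (Nat.choose_pos h).ne'
  have h2 : (u.choose c : ℝ≥0∞) ≠ ⊤ := ENNReal.natCast_ne_top _
  have hc : ((c ! : ℝ≥0∞)) ≠ 0 := Nat.cast_ne_zero.mpr (Nat.factorial_ne_zero c)
  have hc2 : (((u - c)! : ℝ≥0∞)) ≠ 0 := Nat.cast_ne_zero.mpr (Nat.factorial_ne_zero (u - c))
  rw [hkey, ENNReal.mul_inv (Or.inl (mul_ne_zero h1 hc)) (Or.inr hc2),
    ENNReal.mul_inv (Or.inl h1) (Or.inr hc), ← mul_assoc, ← mul_assoc,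
    ENNReal.mul_inv_cancel h1 h2, one_mul]

lemma vand1 (u w n : ℕ) :
    ∑ c ∈ Finset.range (u + 1), u.choose c * w.choose (u + n - c) = (u + w).choose (u + n) := by
  rw [Nat.add_choose_eq, Finset.Nat.sum_antidiagonal_eq_sum_range_succ_mk]
  refine Finset.sum_subset (Finset.range_subset_range.mpr (by omega)) fun c _ hc => ?_
  simp only [Finset.mem_range, not_lt] at hc
  rw [Nat.choose_eq_zero_of_lt (by omega), zero_mul]

lemma vand2 (M n : ℕ) :
    ∑ u ∈ Finset.range (M + 1), M.choose u * M.choose (u + n) = (2 * M).choose (M + n) := by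
  have h0 : (2 * M).choose (M + n) = (M + M).choose (M + n) := by rw [two_mul]
  rw [h0, Nat.add_choose_eq, Finset.Nat.sum_antidiagonal_eq_sum_range_succ_mk]
  rw [show (M + n).succ = (M + 1) + n by omega]
  conv_rhs => rw [Finset.sum_range_add]
  have hz : ∀ i ∈ Finset.range n, M.choose (M + 1 + i) * M.choose (M + n - (M + 1 + i)) = 0 := by
    intro i _
    rw [Nat.choose_eq_zero_of_lt (by omega), zero_mul]
  rw [Finset.sum_eq_zero hz, add_zero, ← Finset.sum_range_reflect]
  refine Finset.sum_congr rfl fun u hu => ?_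
  have hu' : u ≤ M := by have := Finset.mem_range.mp hu; omega
  rw [show M + 1 - 1 - u = M - u by omega, Nat.choose_symm hu',
    show M - u + n = M + n - u by omega]

open Classical in
lemma collapse2 (u w n c : ℕ) (X : ℕ → ℕ → ℝ≥0∞) :
    ∑' (dj : ℕ × ℕ), (if (c + dj.2, dj.1 + dj.2 + n) = (u, w) then X dj.1 dj.2 else 0)
      = if c ≤ u ∧ (u - c) + n ≤ w then X (w - ((u - c) + n)) (u - c) else 0 := by
  rw [ENNReal.tsum_prod (f := fun (d j : ℕ) => if (c + j, d + j + n) = (u, w) then X d j else 0)]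
  rw [ENNReal.tsum_comm]
  have h1 : ∀ j : ℕ, (∑' d, (if (c + j, d + j + n) = (u, w) then X d j else 0))
      = if c + j = u then (if j + n ≤ w then X (w - (j + n)) j else 0) else 0 := by
    intro j
    by_cases hj : c + j = u
    · simp only [Prod.mk.injEq, hj, true_and, if_true]
      have he : ∀ d : ℕ, (d + j + n = w) ↔ (d + (j + n) = w) := fun d => by omega
      simp only [he]
      exact tsum_addeq (j + n) w (fun d => X d j)
    · simp only [Prod.mk.injEq, hj, false_and, if_false]
      exact tsum_zero
  rw [tsum_congr h1, tsum_addeq' c u (fun j => if j + n ≤ w then X (w - (j + n)) j else 0)]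
  by_cases h1 : c ≤ u
  · by_cases h2 : (u - c) + n ≤ w <;> simp [h1, h2]
  · simp [h1]

open Classical in
lemma fiber1 (r : NNReal) (n u w : ℕ) :
    ∑' (t : ℕ × ℕ × ℕ), (if (t.1 + t.2.2, t.2.1 + t.2.2 + n) = (u, w) then
        (r : ℝ≥0∞) ^ t.1 * ((t.1 ! : ℝ≥0∞))⁻¹ *
        ((r : ℝ≥0∞) ^ t.2.1 * ((t.2.1 ! : ℝ≥0∞))⁻¹ *
         ((r : ℝ≥0∞) ^ (2 * t.2.2 + n) * ((t.2.2 ! : ℝ≥0∞))⁻¹ * (((t.2.2 + n)! : ℝ≥0∞))⁻¹))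
      else 0)
      = (r : ℝ≥0∞) ^ (u + w) * ((u ! : ℝ≥0∞))⁻¹ * ((w ! : ℝ≥0∞))⁻¹
          * (((u + w).choose (u + n) : ℕ) : ℝ≥0∞) := by
  rw [ENNReal.tsum_prod (f := fun (c : ℕ) (dj : ℕ × ℕ) =>
      if (c + dj.2, dj.1 + dj.2 + n) = (u, w) then
        (r : ℝ≥0∞) ^ c * ((c ! : ℝ≥0∞))⁻¹ *
        ((r : ℝ≥0∞) ^ dj.1 * ((dj.1 ! : ℝ≥0∞))⁻¹ *
         ((r : ℝ≥0∞) ^ (2 * dj.2 + n) * ((dj.2 ! : ℝ≥0∞))⁻¹ * (((dj.2 + n)! : ℝ≥0∞))⁻¹))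
      else 0)]
  have h1 : ∀ c : ℕ, (∑' (dj : ℕ × ℕ),
      (if (c + dj.2, dj.1 + dj.2 + n) = (u, w) then
        (r : ℝ≥0∞) ^ c * ((c ! : ℝ≥0∞))⁻¹ *
        ((r : ℝ≥0∞) ^ dj.1 * ((dj.1 ! : ℝ≥0∞))⁻¹ *
         ((r : ℝ≥0∞) ^ (2 * dj.2 + n) * ((dj.2 ! : ℝ≥0∞))⁻¹ * (((dj.2 + n)! : ℝ≥0∞))⁻¹))
      else 0))
      = (r : ℝ≥0∞) ^ (u + w) * ((u ! : ℝ≥0∞))⁻¹ * ((w ! : ℝ≥0∞))⁻¹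
          * ((u.choose c * w.choose (u + n - c) : ℕ) : ℝ≥0∞) := by
    intro c
    rw [collapse2 u w n c (X := fun d j =>
      (r : ℝ≥0∞) ^ c * ((c ! : ℝ≥0∞))⁻¹ *
        ((r : ℝ≥0∞) ^ d * ((d ! : ℝ≥0∞))⁻¹ *
         ((r : ℝ≥0∞) ^ (2 * j + n) * ((j ! : ℝ≥0∞))⁻¹ * (((j + n)! : ℝ≥0∞))⁻¹)))]
    by_cases hcu : c ≤ u
    · by_cases hw : (u - c) + n ≤ w
      · rw [if_pos ⟨hcu, hw⟩]
        have e1 : (r : ℝ≥0∞) ^ c * (r : ℝ≥0∞) ^ (w - ((u - c) + n)) * (r : ℝ≥0∞) ^ (2 * (u - c) + n)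
            = (r : ℝ≥0∞) ^ (u + w) := by
          rw [← pow_add, ← pow_add]; congr 1; omega
        have f1 := finv u c hcu
        have f2 := finv w ((u - c) + n) hw
        have e2 : (u - c) + n = u + n - c := by omega
        calc (r : ℝ≥0∞) ^ c * ((c ! : ℝ≥0∞))⁻¹ *
            ((r : ℝ≥0∞) ^ (w - ((u - c) + n)) * (((w - ((u - c) + n))! : ℝ≥0∞))⁻¹ *
             ((r : ℝ≥0∞) ^ (2 * (u - c) + n) * (((u - c)! : ℝ≥0∞))⁻¹ * ((((u - c) + n)! : ℝ≥0∞))⁻¹))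
            = ((r : ℝ≥0∞) ^ c * (r : ℝ≥0∞) ^ (w - ((u - c) + n)) * (r : ℝ≥0∞) ^ (2 * (u - c) + n))
              * (((c ! : ℝ≥0∞))⁻¹ * (((u - c)! : ℝ≥0∞))⁻¹)
              * (((((u - c) + n)! : ℝ≥0∞))⁻¹ * (((w - ((u - c) + n))! : ℝ≥0∞))⁻¹) := by ring
          _ = (r : ℝ≥0∞) ^ (u + w) * ((u.choose c : ℝ≥0∞) * ((u ! : ℝ≥0∞))⁻¹)
              * ((w.choose ((u - c) + n) : ℝ≥0∞) * ((w ! : ℝ≥0∞))⁻¹) := by rw [e1, f1, f2]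
          _ = (r : ℝ≥0∞) ^ (u + w) * ((u ! : ℝ≥0∞))⁻¹ * ((w ! : ℝ≥0∞))⁻¹
              * ((u.choose c * w.choose (u + n - c) : ℕ) : ℝ≥0∞) := by
            rw [e2]; push_cast; ring
      · rw [if_neg (by tauto)]
        have : w.choose (u + n - c) = 0 := Nat.choose_eq_zero_of_lt (by omega)
        rw [this, Nat.mul_zero, Nat.cast_zero, mul_zero]
    · rw [if_neg (by tauto)]
      have : u.choose c = 0 := Nat.choose_eq_zero_of_lt (by omega)
      rw [this, Nat.zero_mul, Nat.cast_zero, mul_zero]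
  rw [tsum_congr h1, ENNReal.tsum_mul_left]
  congr 1
  rw [tsum_eq_sum (s := Finset.range (u + 1)) (fun c hc => by
    simp only [Finset.mem_range, not_lt] at hc
    rw [Nat.choose_eq_zero_of_lt (by omega), Nat.zero_mul, Nat.cast_zero])]
  rw [← Nat.cast_sum, vand1 u w n]

open Classical in
lemma fiber2 (r : NNReal) (n M : ℕ) :
    ∑' (uw : ℕ × ℕ), (if uw.1 + uw.2 = M then
        (r : ℝ≥0∞) ^ (uw.1 + uw.2) * ((uw.1 ! : ℝ≥0∞))⁻¹ * ((uw.2 ! : ℝ≥0∞))⁻¹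
          * (((uw.1 + uw.2).choose (uw.1 + n) : ℕ) : ℝ≥0∞) else 0)
      = (r : ℝ≥0∞) ^ M * ((M ! : ℝ≥0∞))⁻¹ * (((2 * M).choose (M + n) : ℕ) : ℝ≥0∞) := by
  rw [ENNReal.tsum_prod (f := fun (u w : ℕ) => if u + w = M then
        (r : ℝ≥0∞) ^ (u + w) * ((u ! : ℝ≥0∞))⁻¹ * ((w ! : ℝ≥0∞))⁻¹
          * (((u + w).choose (u + n) : ℕ) : ℝ≥0∞) else 0)]
  have h1 : ∀ u : ℕ, (∑' (w : ℕ), if u + w = M then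
        (r : ℝ≥0∞) ^ (u + w) * ((u ! : ℝ≥0∞))⁻¹ * ((w ! : ℝ≥0∞))⁻¹
          * (((u + w).choose (u + n) : ℕ) : ℝ≥0∞) else 0)
      = if u ≤ M then (r : ℝ≥0∞) ^ M * ((M ! : ℝ≥0∞))⁻¹
          * ((M.choose u * M.choose (u + n) : ℕ) : ℝ≥0∞) else 0 := by
    intro u
    rw [tsum_addeq' u M (fun w => (r : ℝ≥0∞) ^ (u + w) * ((u ! : ℝ≥0∞))⁻¹ * ((w ! : ℝ≥0∞))⁻¹
          * (((u + w).choose (u + n) : ℕ) : ℝ≥0∞))]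
    split_ifs with h
    · have e1 : u + (M - u) = M := by omega
      rw [e1]
      rw [show (r : ℝ≥0∞) ^ M * ((u ! : ℝ≥0∞))⁻¹ * (((M - u)! : ℝ≥0∞))⁻¹ * ((M.choose (u + n) : ℕ) : ℝ≥0∞)
          = (r : ℝ≥0∞) ^ M * (((u ! : ℝ≥0∞))⁻¹ * (((M - u)! : ℝ≥0∞))⁻¹) * ((M.choose (u + n) : ℕ) : ℝ≥0∞) from by ring,
        finv M u h]
      push_cast
      ring
    · rfl
  rw [tsum_congr h1, tsum_eq_sum (s := Finset.range (M + 1))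
    (fun u hu => if_neg (by simp only [Finset.mem_range, not_lt] at hu; omega))]
  have h2 : ∀ u ∈ Finset.range (M + 1), (if u ≤ M then (r : ℝ≥0∞) ^ M * ((M ! : ℝ≥0∞))⁻¹
          * ((M.choose u * M.choose (u + n) : ℕ) : ℝ≥0∞) else 0)
      = (r : ℝ≥0∞) ^ M * ((M ! : ℝ≥0∞))⁻¹ * ((M.choose u * M.choose (u + n) : ℕ) : ℝ≥0∞) := by
    intro u hu
    rw [if_pos (by simp only [Finset.mem_range] at hu; omega)]
  rw [Finset.sum_congr rfl h2, ← Finset.mul_sum, ← Nat.cast_sum, vand2 M n]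

lemma E1_ne_zero (r : NNReal) : E1 r ≠ 0 := by
  have h := ENNReal.le_tsum (f := fun i : ℕ => (r : ℝ≥0∞) ^ i * ((i ! : ℝ≥0∞))⁻¹) 0
  simp only [pow_zero, Nat.factorial_zero, Nat.cast_one, inv_one, mul_one] at h
  rw [E1]
  intro hc
  rw [hc] at h
  exact (by simp at h : False)

lemma E1_ne_top (r : NNReal) : E1 r ≠ ⊤ := by
  have h : E1 r = ENNReal.ofReal (∑' i : ℕ, (r : ℝ) ^ i / i !) := by
    rw [ENNReal.ofReal_tsum_of_nonneg (fun i => by positivity)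
      (Real.summable_pow_div_factorial r)]
    refine tsum_congr fun i => ?_
    rw [div_eq_mul_inv, ENNReal.ofReal_mul (by positivity), ENNReal.ofReal_pow r.coe_nonneg,
      ENNReal.ofReal_coe_nnreal, ENNReal.ofReal_inv_of_pos (by positivity),
      ENNReal.ofReal_natCast]
  rw [h]
  exact ENNReal.ofReal_ne_top

open Classical in
lemma key_id (r : NNReal) (n : ℕ) :
    E1 r * (E1 r * Phi r n)
      = ∑' M : ℕ, (r : ℝ≥0∞) ^ M * ((M ! : ℝ≥0∞))⁻¹ * (((2 * M).choose (M + n) : ℕ) : ℝ≥0∞) := by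
  unfold E1 Phi
  rw [tsum_mul_tsum' (fun d : ℕ => (r : ℝ≥0∞) ^ d * ((d ! : ℝ≥0∞))⁻¹)
    (fun j : ℕ => (r : ℝ≥0∞) ^ (2 * j + n) * ((j ! : ℝ≥0∞))⁻¹ * (((j + n)! : ℝ≥0∞))⁻¹)]
  rw [tsum_mul_tsum' (fun c : ℕ => (r : ℝ≥0∞) ^ c * ((c ! : ℝ≥0∞))⁻¹)
    (fun dj : ℕ × ℕ => ((r : ℝ≥0∞) ^ dj.1 * ((dj.1 ! : ℝ≥0∞))⁻¹) *
      ((r : ℝ≥0∞) ^ (2 * dj.2 + n) * ((dj.2 ! : ℝ≥0∞))⁻¹ * (((dj.2 + n)! : ℝ≥0∞))⁻¹))]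
  rw [← tsum_group (fun t : ℕ × ℕ × ℕ => (t.1 + t.2.2, t.2.1 + t.2.2 + n))
    (fun t : ℕ × ℕ × ℕ => (r : ℝ≥0∞) ^ t.1 * ((t.1 ! : ℝ≥0∞))⁻¹ *
      ((r : ℝ≥0∞) ^ t.2.1 * ((t.2.1 ! : ℝ≥0∞))⁻¹ *
       ((r : ℝ≥0∞) ^ (2 * t.2.2 + n) * ((t.2.2 ! : ℝ≥0∞))⁻¹ * (((t.2.2 + n)! : ℝ≥0∞))⁻¹)))]
  refine (tsum_congr fun y : ℕ × ℕ => fiber1 r n y.1 y.2).trans ?_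
  refine ((tsum_group (fun uw : ℕ × ℕ => uw.1 + uw.2)
    (fun uw : ℕ × ℕ => (r : ℝ≥0∞) ^ (uw.1 + uw.2) * ((uw.1 ! : ℝ≥0∞))⁻¹ * ((uw.2 ! : ℝ≥0∞))⁻¹
      * (((uw.1 + uw.2).choose (uw.1 + n) : ℕ) : ℝ≥0∞))).symm).trans ?_
  exact tsum_congr fun M => fiber2 r n M

lemma Phi_anti (r : NNReal) (n : ℕ) : Phi r (n + 1) ≤ Phi r n := by
  have hle : E1 r * (E1 r * Phi r (n + 1)) ≤ E1 r * (E1 r * Phi r n) := by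
    rw [key_id, key_id]
    refine Summable.tsum_le_tsum (fun M => ?_) ENNReal.summable ENNReal.summable
    refine mul_le_mul_right (Nat.cast_le.mpr ?_) _
    refine Nat.le_of_mul_le_mul_right ?_ (show 0 < M + n + 1 by omega)
    calc (2 * M).choose (M + (n + 1)) * (M + n + 1)
        = (2 * M).choose (M + n) * (2 * M - (M + n)) := by
          rw [show M + (n + 1) = (M + n) + 1 by omega]
          exact Nat.choose_succ_right_eq (2 * M) (M + n)
      _ ≤ (2 * M).choose (M + n) * (M + n + 1) := Nat.mul_le_mul_left _ (by omega)
  exact (ENNReal.mul_le_mul_iff_right (E1_ne_zero r) (E1_ne_top r)).mp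
    ((ENNReal.mul_le_mul_iff_right (E1_ne_zero r) (E1_ne_top r)).mp hle)

lemma P_eq (r : NNReal) (k : ℕ) :
    poissonPMF r k = ENNReal.ofReal (Real.exp (-(r : ℝ))) * ((r : ℝ≥0∞) ^ k * ((k ! : ℝ≥0∞))⁻¹) := by
  show ENNReal.ofReal (poissonPMFReal r k) = _
  rw [poissonPMFReal, div_eq_mul_inv, mul_assoc,
    ENNReal.ofReal_mul (by positivity), ENNReal.ofReal_mul (by positivity),
    ENNReal.ofReal_pow r.coe_nonneg, ENNReal.ofReal_coe_nnreal,
    ENNReal.ofReal_inv_of_pos (by positivity), ENNReal.ofReal_natCast]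

lemma skN_eq (r : NNReal) (n : ℕ) :
    skN r n = (ENNReal.ofReal (Real.exp (-(r : ℝ))))^2 * Phi r n := by
  rw [skN, Phi, ← ENNReal.tsum_mul_left]
  refine tsum_congr fun j => ?_
  rw [P_eq, P_eq]
  rw [show 2 * j + n = (j + n) + j by omega, pow_add]
  ring

lemma skN_anti (r : NNReal) : ∀ a b : ℕ, a ≤ b → skN r b ≤ skN r a := by
  intro a b h
  induction b, h using Nat.le_induction with
  | base => exact le_rfl
  | succ b hb ih =>
    refine le_trans ?_ ih
    rw [skN_eq, skN_eq]
    exact mul_le_mul_right (Phi_anti r b) _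



/-- The Skellam distribution `Skellam(μ₁, μ₂)`: the law of `N₁ - N₂` for independent
`N₁ ∼ Poisson(μ₁)`, `N₂ ∼ Poisson(μ₂)`. -/
noncomputable def skellam (μ1 μ2 : NNReal) : Measure ℤ :=
  ((poissonMeasure μ1).prod (poissonMeasure μ2)).map (fun nm => (nm.1 : ℤ) - (nm.2 : ℤ))

open Classical in
lemma skellam_apply (μ1 μ2 : NNReal) (S : Set ℤ) :
    skellam μ1 μ2 S = ∑' (ab : ℕ × ℕ),
      if ((ab.1 : ℤ) - ab.2) ∈ S then poissonPMF μ1 ab.1 * poissonPMF μ2 ab.2 else 0 := by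
  classical
  rw [skellam, Measure.map_apply (measurable_of_countable _) (MeasurableSet.of_discrete),
    Measure.prod_apply (MeasurableSet.of_discrete)]
  rw [poissonMeasure, poissonMeasure, lintegral_countable']
  rw [ENNReal.tsum_prod (f := fun (a b : ℕ) =>
    (if ((a : ℤ) - (b : ℤ)) ∈ S then poissonPMF μ1 a * poissonPMF μ2 b else 0))]
  refine tsum_congr fun a => ?_
  rw [Measure.sum_smul_dirac_singleton, Measure.sum_apply _ (MeasurableSet.of_discrete),
    ← ENNReal.tsum_mul_right]
  refine tsum_congr fun b => ?_
  rw [Measure.smul_apply, smul_eq_mul, Measure.dirac_apply' _ (MeasurableSet.of_discrete)]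
  simp only [Set.indicator_apply, Set.mem_preimage, Set.mem_setOf_eq, Pi.one_apply]
  split_ifs with h
  · show _ = ENNReal.ofReal (poissonPMFReal μ1 a) * ENNReal.ofReal (poissonPMFReal μ2 b)
    unfold poissonPMFReal
    ring
  · ring


lemma real_pois_add (r s : ℝ) (m : ℕ) :
    ∑ k ∈ Finset.range (m + 1),
      (Real.exp (-r) * r ^ k / k !) * (Real.exp (-s) * s ^ (m - k) / (m - k)!)
      = Real.exp (-(r + s)) * (r + s) ^ m / m ! := by
  rw [add_pow, Finset.mul_sum, Finset.sum_div]
  refine Finset.sum_congr rfl fun k hk => ?_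
  have hk' : k ≤ m := by have := Finset.mem_range.mp hk; omega
  have hc : ((m.choose k : ℝ)) * (k ! : ℝ) * ((m - k)! : ℝ) = (m ! : ℝ) := by
    exact_mod_cast congrArg (Nat.cast (R := ℝ)) (Nat.choose_mul_factorial_mul_factorial hk')
  have h1 : (k ! : ℝ) ≠ 0 := Nat.cast_ne_zero.mpr (Nat.factorial_ne_zero k)
  have h2 : ((m - k)! : ℝ) ≠ 0 := Nat.cast_ne_zero.mpr (Nat.factorial_ne_zero (m - k))
  have h3 : (m ! : ℝ) ≠ 0 := Nat.cast_ne_zero.mpr (Nat.factorial_ne_zero m)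
  have he : Real.exp (-(r + s)) = Real.exp (-r) * Real.exp (-s) := by
    rw [← Real.exp_add]; ring_nf
  have h4 : ((m.choose k : ℝ)) ≠ 0 := Nat.cast_ne_zero.mpr (Nat.choose_pos hk').ne'
  rw [he, ← hc]
  field_simp
open Classical in
lemma P_add (r s : NNReal) (m : ℕ) :
    poissonPMF (r + s) m = ∑' (iu : ℕ × ℕ),
      if iu.1 + iu.2 = m then poissonPMF r iu.1 * poissonPMF s iu.2 else 0 := by
  rw [tsum_eq_sum (s := Finset.HasAntidiagonal.antidiagonal m)
    (fun b hb => if_neg (by simpa [Finset.HasAntidiagonal.mem_antidiagonal] using hb))]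
  rw [Finset.Nat.sum_antidiagonal_eq_sum_range_succ_mk]
  have hpos : ∀ (q : NNReal) (j : ℕ), poissonPMF q j = ENNReal.ofReal (poissonPMFReal q j) :=
    fun q j => rfl
  have h1 : ∀ k ∈ Finset.range (m + 1),
      (if k + (m - k) = m then poissonPMF r k * poissonPMF s (m - k) else 0)
        = ENNReal.ofReal (poissonPMFReal r k * poissonPMFReal s (m - k)) := by
    intro k hk
    have := Finset.mem_range.mp hk
    rw [if_pos (by omega), hpos, hpos, ← ENNReal.ofReal_mul poissonPMFReal_nonneg]
  rw [Finset.sum_congr rfl h1, ← ENNReal.ofReal_sum_of_nonneg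
    (fun k _ => mul_nonneg poissonPMFReal_nonneg poissonPMFReal_nonneg)]
  rw [hpos]
  congr 1
  unfold poissonPMFReal
  push_cast
  exact (real_pois_add r s m).symm

noncomputable def Tm (r : NNReal) (k : ℕ) (m : ℤ) : ℝ≥0∞ :=
  ∑' (ab : ℕ × ℕ), if (((ab.1 : ℤ) - (ab.2 : ℤ)) + m).natAbs ≤ k
    then poissonPMF r ab.1 * poissonPMF r ab.2 else 0

open Classical in
lemma inner_eval (r s : NNReal) (k : ℕ) (a b : ℕ) :
    ∑' (x : (ℕ × ℕ) × (ℕ × ℕ)),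
      (if (x.1.1 + x.1.2, x.2.1 + x.2.2) = (a, b) then
        (if (((x.1.1 : ℤ) - (x.2.1 : ℤ)) + ((x.1.2 : ℤ) - (x.2.2 : ℤ))).natAbs ≤ k then
          (poissonPMF r x.1.1 * poissonPMF s x.1.2) * (poissonPMF r x.2.1 * poissonPMF s x.2.2)
        else 0) else 0)
      = if ((a : ℤ) - (b : ℤ)).natAbs ≤ k
          then poissonPMF (r + s) a * poissonPMF (r + s) b else 0 := by
  have step1 : ∀ x : (ℕ × ℕ) × (ℕ × ℕ),
      (if (x.1.1 + x.1.2, x.2.1 + x.2.2) = (a, b) then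
        (if (((x.1.1 : ℤ) - (x.2.1 : ℤ)) + ((x.1.2 : ℤ) - (x.2.2 : ℤ))).natAbs ≤ k then
          (poissonPMF r x.1.1 * poissonPMF s x.1.2) * (poissonPMF r x.2.1 * poissonPMF s x.2.2)
        else 0) else 0)
      = (if ((a : ℤ) - (b : ℤ)).natAbs ≤ k then
          (if x.1.1 + x.1.2 = a then poissonPMF r x.1.1 * poissonPMF s x.1.2 else 0) *
          (if x.2.1 + x.2.2 = b then poissonPMF r x.2.1 * poissonPMF s x.2.2 else 0) else 0) := by
    rintro ⟨⟨i, u⟩, ⟨p, q⟩⟩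
    simp only [Prod.mk.injEq]
    by_cases h1 : i + u = a
    · by_cases h2 : p + q = b
      · have hcond : ((((i : ℤ) - (p : ℤ)) + ((u : ℤ) - (q : ℤ))).natAbs ≤ k)
            ↔ (((a : ℤ) - (b : ℤ)).natAbs ≤ k) := by omega
        simp [h1, h2, hcond]
      · simp [h2]
    · simp [h1]
  rw [tsum_congr step1, tsum_ite_const]
  split_ifs with h
  · rw [P_add, P_add]
    exact (tsum_mul_tsum' (fun iu : ℕ × ℕ => if iu.1 + iu.2 = a then poissonPMF r iu.1 * poissonPMF s iu.2 else 0)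
      (fun pq : ℕ × ℕ => if pq.1 + pq.2 = b then poissonPMF r pq.1 * poissonPMF s pq.2 else 0)).symm
  · rfl

open Classical in
lemma convol (r s : NNReal) (k : ℕ) :
    skellam (r + s) (r + s) {x : ℤ | x.natAbs ≤ k}
      = ∑' (uq : ℕ × ℕ), poissonPMF s uq.1 * poissonPMF s uq.2 * Tm r k ((uq.1 : ℤ) - (uq.2 : ℤ)) := by
  set H : (ℕ × ℕ) × (ℕ × ℕ) → ℝ≥0∞ := fun x =>
    if (((x.1.1 : ℤ) - (x.2.1 : ℤ)) + ((x.1.2 : ℤ) - (x.2.2 : ℤ))).natAbs ≤ k then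
      (poissonPMF r x.1.1 * poissonPMF s x.1.2) * (poissonPMF r x.2.1 * poissonPMF s x.2.2)
    else 0 with hH
  have e := Equiv.prodProdProdComm ℕ ℕ ℕ ℕ
  calc skellam (r + s) (r + s) {x : ℤ | x.natAbs ≤ k}
      = ∑' (ab : ℕ × ℕ), if (((ab.1 : ℤ) - (ab.2 : ℤ))).natAbs ≤ k
          then poissonPMF (r + s) ab.1 * poissonPMF (r + s) ab.2 else 0 := by
        rw [skellam_apply]
        exact tsum_congr fun ab => by simp only [Set.mem_setOf_eq]
    _ = ∑' (ab : ℕ × ℕ), ∑' (x : (ℕ × ℕ) × (ℕ × ℕ)),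
          (if (x.1.1 + x.1.2, x.2.1 + x.2.2) = ab then H x else 0) := by
        refine tsum_congr fun ab => ?_
        rw [show (ab = (ab.1, ab.2)) from rfl]
        exact (inner_eval r s k ab.1 ab.2).symm
    _ = ∑' (x : (ℕ × ℕ) × (ℕ × ℕ)), H x :=
        tsum_group (fun x : (ℕ × ℕ) × (ℕ × ℕ) => (x.1.1 + x.1.2, x.2.1 + x.2.2)) H
    _ = ∑' (y : (ℕ × ℕ) × (ℕ × ℕ)), H (Equiv.prodProdProdComm ℕ ℕ ℕ ℕ y) :=
        ((Equiv.prodProdProdComm ℕ ℕ ℕ ℕ).tsum_eq H).symm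
    _ = ∑' (ip : ℕ × ℕ) (uq : ℕ × ℕ), H (Equiv.prodProdProdComm ℕ ℕ ℕ ℕ (ip, uq)) :=
        ENNReal.tsum_prod (f := fun ip uq => H (Equiv.prodProdProdComm ℕ ℕ ℕ ℕ (ip, uq)))
    _ = ∑' (uq : ℕ × ℕ) (ip : ℕ × ℕ), H (Equiv.prodProdProdComm ℕ ℕ ℕ ℕ (ip, uq)) :=
        ENNReal.tsum_comm
    _ = ∑' (uq : ℕ × ℕ), poissonPMF s uq.1 * poissonPMF s uq.2 * Tm r k ((uq.1 : ℤ) - (uq.2 : ℤ)) := by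
        refine tsum_congr fun uq => ?_
        rw [Tm, ← ENNReal.tsum_mul_left]
        refine tsum_congr fun ip => ?_
        simp only [hH, Equiv.prodProdProdComm_apply, Prod.fst, Prod.snd]
        split_ifs with h1
        · ring
        · simp



open Classical in
lemma fiber_eval (r : NNReal) (z : ℤ) :
    ∑' (ab : ℕ × ℕ), (if ((ab.1 : ℤ) - (ab.2 : ℤ)) = z then poissonPMF r ab.1 * poissonPMF r ab.2 else 0)
      = skN r z.natAbs := by
  rw [ENNReal.tsum_prod (f := fun (a b : ℕ) =>
    (if ((a : ℤ) - (b : ℤ)) = z then poissonPMF r a * poissonPMF r b else 0))]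
  rcases le_or_gt 0 z with hz | hz
  · rw [ENNReal.tsum_comm]
    refine tsum_congr fun b => ?_
    have : ∀ a : ℕ, (((a : ℤ) - (b : ℤ)) = z) ↔ a = b + z.natAbs := by intro a; omega
    simp only [this]
    exact tsum_ite_eq_left (fun a => poissonPMF r a * poissonPMF r b) (b + z.natAbs)
  · refine tsum_congr fun a => ?_
    have : ∀ b : ℕ, (((a : ℤ) - (b : ℤ)) = z) ↔ b = a + z.natAbs := by intro b; omega
    simp only [this]
    rw [tsum_ite_eq_left (fun b => poissonPMF r a * poissonPMF r b) (a + z.natAbs)]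
    rw [mul_comm, add_comm a z.natAbs]

open Classical in
lemma Tm_eq (r : NNReal) (k : ℕ) (m : ℤ) :
    Tm r k m = ∑ z ∈ Finset.Icc (-m - k) (-m + k), skN r z.natAbs := by
  rw [Tm]
  refine ((tsum_group (fun ab : ℕ × ℕ => (ab.1 : ℤ) - (ab.2 : ℤ))
    (fun ab => if (((ab.1 : ℤ) - (ab.2 : ℤ)) + m).natAbs ≤ k
      then poissonPMF r ab.1 * poissonPMF r ab.2 else 0)).symm.trans ?_)
  have h1 : ∀ z : ℤ, ∑' (ab : ℕ × ℕ), (if (ab.1 : ℤ) - (ab.2 : ℤ) = z then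
      (if (((ab.1 : ℤ) - (ab.2 : ℤ)) + m).natAbs ≤ k
        then poissonPMF r ab.1 * poissonPMF r ab.2 else 0) else 0)
      = if (z + m).natAbs ≤ k then skN r z.natAbs else 0 := by
    intro z
    rw [← fiber_eval r z, ← tsum_ite_const ((z + m).natAbs ≤ k)]
    refine tsum_congr fun ab => ?_
    by_cases h : (ab.1 : ℤ) - (ab.2 : ℤ) = z
    · subst h
      split_ifs <;> rfl
    · simp only [if_neg h]
      split_ifs <;> rfl
  refine (tsum_congr h1).trans ?_
  rw [tsum_eq_sum (s := Finset.Icc (-m - k) (-m + k))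
    (fun z hz => if_neg (by simp only [Finset.mem_Icc] at hz; omega))]
  exact Finset.sum_congr rfl fun z hz => if_pos (by simp only [Finset.mem_Icc] at hz; omega)

lemma sum_sym (g : ℕ → ℝ≥0∞) (k : ℕ) (c : ℤ) :
    ∑ z ∈ Finset.Icc (c - k) (c + k), g z.natAbs
      = ∑ z ∈ Finset.Icc (-c - k) (-c + k), g z.natAbs := by
  refine Finset.sum_nbij' (fun z => -z) (fun z => -z) ?_ ?_ ?_ ?_ ?_
  · intro a ha; simp only [Finset.mem_Icc] at *; omega
  · intro a ha; simp only [Finset.mem_Icc] at *; omega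
  · intro a _; ring
  · intro a _; ring
  · intro a _; rw [Int.natAbs_neg]

lemma sum_shift_le (g : ℕ → ℝ≥0∞) (hg : ∀ a b : ℕ, a ≤ b → g b ≤ g a) (k : ℕ) (c : ℤ) :
    ∑ z ∈ Finset.Icc (c - k) (c + k), g z.natAbs
      ≤ ∑ z ∈ Finset.Icc (-(k : ℤ)) k, g z.natAbs := by
  have main : ∀ c : ℤ, 0 ≤ c → ∑ z ∈ Finset.Icc (c - k) (c + k), g z.natAbs
      ≤ ∑ z ∈ Finset.Icc (-(k : ℤ)) k, g z.natAbs := by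
    intro c hc
    refine Int.le_induction (motive := fun c _ => ∑ z ∈ Finset.Icc (c - k) (c + k), g z.natAbs
      ≤ ∑ z ∈ Finset.Icc (-(k : ℤ)) k, g z.natAbs) ?_ ?_ c hc
    · simp only [zero_sub, zero_add]; exact le_rfl
    · intro c hc ih
      refine le_trans ?_ ih
      have h1 : Finset.Icc (c + 1 - k) (c + 1 + k)
          = insert (c + 1 + k) (Finset.Icc (c + 1 - k) (c + k)) := by
        ext z; simp only [Finset.mem_Icc, Finset.mem_insert]; omega
      have h2 : Finset.Icc (c - k) (c + k)
          = insert (c - k) (Finset.Icc (c + 1 - k) (c + k)) := by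
        ext z; simp only [Finset.mem_Icc, Finset.mem_insert]; omega
      rw [h1, h2, Finset.sum_insert (by simp only [Finset.mem_Icc]; omega),
        Finset.sum_insert (by simp only [Finset.mem_Icc]; omega)]
      exact add_le_add (hg _ _ (by omega)) le_rfl
  rcases le_or_gt 0 c with hc | hc
  · exact main c hc
  · rw [sum_sym]; exact main (-c) (by omega)

open Classical in
lemma Tm_le (r : NNReal) (k : ℕ) (m : ℤ) : Tm r k m ≤ Tm r k 0 := by
  rw [Tm_eq, Tm_eq]
  have hset : Finset.Icc (-(0 : ℤ) - k) (-(0 : ℤ) + k) = Finset.Icc (-(k : ℤ)) k := by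
    ext z; simp only [Finset.mem_Icc]; omega
  rw [hset]
  exact sum_shift_le (skN r) (skN_anti r) k (-m)

open Classical in
lemma Tm_zero (r : NNReal) (k : ℕ) : Tm r k 0 = skellam r r {x : ℤ | x.natAbs ≤ k} := by
  rw [skellam_apply, Tm]
  refine tsum_congr fun ab => ?_
  simp only [add_zero, Set.mem_setOf_eq]

/-- For `0 < v < v'`, `X ∼ Skellam(v/2, v/2)` and `X' ∼ Skellam(v'/2, v'/2)`, `|X|` is
stochastically not greater than `|X'|`: `P(|X| ≤ k) ≥ P(|X'| ≤ k)` for all `k ∈ ℕ₀`. -/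
theorem stmt12 (v v' : NNReal) (hv : 0 < v) (hvv' : v < v') (k : ℕ) :
    skellam (v' / 2) (v' / 2) {x : ℤ | x.natAbs ≤ k}
      ≤ skellam (v / 2) (v / 2) {x : ℤ | x.natAbs ≤ k} := by
  set r : NNReal := v / 2 with hr
  set s : NNReal := v' / 2 - v / 2 with hs
  have hle : v / 2 ≤ v' / 2 := by
    rw [div_eq_mul_inv, div_eq_mul_inv]
    exact mul_le_mul_left hvv'.le _
  have hsum : r + s = v' / 2 := add_tsub_cancel_of_le hle
  calc skellam (v' / 2) (v' / 2) {x : ℤ | x.natAbs ≤ k}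
      = skellam (r + s) (r + s) {x : ℤ | x.natAbs ≤ k} := by rw [hsum]
    _ = ∑' (uq : ℕ × ℕ), poissonPMF s uq.1 * poissonPMF s uq.2
          * Tm r k ((uq.1 : ℤ) - (uq.2 : ℤ)) := convol r s k
    _ ≤ ∑' (uq : ℕ × ℕ), poissonPMF s uq.1 * poissonPMF s uq.2 * Tm r k 0 :=
        Summable.tsum_le_tsum (fun uq => mul_le_mul_right (Tm_le r k _) _)
          ENNReal.summable ENNReal.summable
    _ = (∑' (uq : ℕ × ℕ), poissonPMF s uq.1 * poissonPMF s uq.2) * Tm r k 0 :=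
        ENNReal.tsum_mul_right
    _ = 1 * Tm r k 0 := by
        have h := tsum_mul_tsum' (fun a : ℕ => poissonPMF s a) (fun b : ℕ => poissonPMF s b)
        simp only [PMF.tsum_coe] at h
        rw [← h, one_mul]
    _ = skellam r r {x : ℤ | x.natAbs ≤ k} := by rw [one_mul, Tm_zero]
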